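/- Let e ∈ 𝓔 and u = (p;q) ∈ ℝ⁴_≤ with p ≠ q. Set p_n¹ := p + (1,1)/n and p_n² := p + (-1,1)/n. Then e(p⁺;q) = max{sup_n e(p_n^*;q) : * ∈ {1,2}}. -/
import Mathlib


open Filter Set Topology MeasureTheory
open scoped ENNReal

noncomputable section

/-- The space-time (light-cone) partial order on `ℝ²`: `q ∈ ∨_p`. -/
def cle (p q : ℝ × ℝ) : Prop := |q.1 - p.1| ≤ q.2 - p.2

/-- `e(r⁺, q) := sup {e(r', q) : r' ∈ ∨_r \ {r}}` for `r ≠ q`, and `0` otherwise. -/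
def ePlus (e : ℝ × ℝ → ℝ × ℝ → ℝ) (r q : ℝ × ℝ) : ℝ :=
  if r = q then 0 else sSup ((fun r' => e r' q) '' {r' | cle r r' ∧ r' ≠ r})

/-- Membership in `𝓔`: non-negative upper semi-continuous functions on `ℝ⁴_≤`
(extended by `0` off `ℝ⁴_≤`) satisfying the generalized reverse triangle inequality. -/
structure IsE (e : ℝ × ℝ → ℝ × ℝ → ℝ) : Prop where
  nonneg : ∀ p q, 0 ≤ e p q
  usc : UpperSemicontinuous (fun u : (ℝ × ℝ) × (ℝ × ℝ) => e u.1 u.2)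
  zero_of_not_cle : ∀ p q, ¬ cle p q → e p q = 0
  triangle : ∀ p r q, cle p r → cle r q → e p r + ePlus e r q ≤ e p q

/-- Two point pairs `u, v ∈ ℝ⁴_≤` are disjoint if no `r` satisfies
`u.1 ≤ r ≤ u.2` and `v.1 ≤ r ≤ v.2` simultaneously. -/
def ptsDisjoint (u v : (ℝ × ℝ) × (ℝ × ℝ)) : Prop :=
  ¬ ∃ r : ℝ × ℝ, cle u.1 r ∧ cle r u.2 ∧ cle v.1 r ∧ cle r v.2

/-- `Θ(e, u) := J((y-x)/(t-s), e(u)/(t-s)) · (t-s)` for `u = (x,s;y,t)`. -/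
def ThetaPt (J : ℝ → ℝ → ℝ≥0∞) (e : ℝ × ℝ → ℝ × ℝ → ℝ) (u : (ℝ × ℝ) × (ℝ × ℝ)) : ℝ≥0∞ :=
  J ((u.2.1 - u.1.1) / (u.2.2 - u.1.2)) (e u.1 u.2 / (u.2.2 - u.1.2)) *
    ENNReal.ofReal (u.2.2 - u.1.2)

/-- The preliminary rate function `Θ(e)`: the supremum over countable collections of
pairwise disjoint non-degenerate points of the sums of `Θ(e, u_i)`. -/
def Theta (J : ℝ → ℝ → ℝ≥0∞) (e : ℝ × ℝ → ℝ × ℝ → ℝ) : ℝ≥0∞ :=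
  ⨆ (U : Set ((ℝ × ℝ) × (ℝ × ℝ))) (_ : U.Countable)
    (_ : ∀ u ∈ U, cle u.1 u.2 ∧ u.1.2 ≠ u.2.2)
    (_ : U.Pairwise ptsDisjoint), ∑' u : U, ThetaPt J e u.val

/-- Property A2 for the point-to-point rate function `J` (with `Fγ γ = F(γ,1)` the shape
function): joint convexity, continuity, vanishing below the shape function, and strict
monotonicity above it. -/
structure PropA2 (J : ℝ → ℝ → ℝ≥0∞) (Fγ : ℝ → ℝ) : Prop where
  cont : Continuous fun v : ℝ × ℝ => J v.1 v.2
  convex : ∀ a b γ₁ γ₂ x₁ x₂ : ℝ, 0 ≤ a → 0 ≤ b → a + b = 1 →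
    J (a * γ₁ + b * γ₂) (a * x₁ + b * x₂) ≤
      ENNReal.ofReal a * J γ₁ x₁ + ENNReal.ofReal b * J γ₂ x₂
  zero_of_le : ∀ γ x : ℝ, x ≤ Fγ γ → J γ x = 0
  strictMono : ∀ γ : ℝ, StrictMonoOn (J γ) (Ici (Fγ γ))


private lemma bddAbove_image_of_usc' {α : Type*} [TopologicalSpace α] {f : α → ℝ}
    (hf : UpperSemicontinuous f) {K : Set α} (hK : IsCompact K) :
    BddAbove (f '' K) := by
  obtain ⟨t, hts, hcov⟩ := hK.elim_nhds_subcover (fun x => {y | f y < f x + 1})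
    (fun x _ => hf x (f x + 1) (lt_add_one _))
  rcases K.eq_empty_or_nonempty with h | ⟨z, hz⟩
  · simp [h]
  · have htne : t.Nonempty := by
      have h2 := hcov hz
      simp only [Set.mem_iUnion] at h2
      obtain ⟨x, hx, _⟩ := h2
      exact ⟨x, hx⟩
    refine ⟨t.sup' htne (fun x => f x + 1), ?_⟩
    rintro y ⟨w, hw, rfl⟩
    have h2 := hcov hw
    simp only [Set.mem_iUnion, Set.mem_setOf_eq] at h2
    obtain ⟨x, hx, hfw⟩ := h2
    exact le_trans hfw.le (Finset.le_sup' (fun x => f x + 1) hx)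

private lemma usc_snd {e : ℝ × ℝ → ℝ × ℝ → ℝ} (he : IsE e) (q : ℝ × ℝ) :
    UpperSemicontinuous (fun r' : ℝ × ℝ => e r' q) := by
  intro x y hy
  have hc : Continuous (fun r' : ℝ × ℝ => (r', q)) := continuous_id.prodMk continuous_const
  exact (hc.tendsto x).eventually (he.usc (x, q) y hy)

private lemma diamond_compact (a q : ℝ × ℝ) :
    IsCompact {r' : ℝ × ℝ | cle a r' ∧ cle r' q} := by
  have hclosed : IsClosed {r' : ℝ × ℝ | cle a r' ∧ cle r' q} := by
    apply IsClosed.inter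
    · exact isClosed_le ((continuous_fst.sub continuous_const).abs)
        (continuous_snd.sub continuous_const)
    · exact isClosed_le ((continuous_const.sub continuous_fst).abs)
        (continuous_const.sub continuous_snd)
  refine IsCompact.of_isClosed_subset (isCompact_Icc
    (a := (a.1 - (q.2 - a.2), a.2)) (b := (a.1 + (q.2 - a.2), q.2))) hclosed ?_
  rintro r' ⟨h1, h2⟩
  have hx1 := abs_le.mp h1
  have hx2 := abs_le.mp h2
  simp only [Set.mem_Icc, Prod.le_def]
  refine ⟨⟨?_, ?_⟩, ?_, ?_⟩ <;>
    linarith [hx1.1, hx1.2, hx2.1, hx2.2]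

private lemma bdd_key {e : ℝ × ℝ → ℝ × ℝ → ℝ} (he : IsE e) (q a : ℝ × ℝ) :
    BddAbove ((fun r' => e r' q) '' {r' | cle a r' ∧ r' ≠ a}) := by
  obtain ⟨M, hM⟩ := bddAbove_image_of_usc' (usc_snd he q) (diamond_compact a q)
  refine ⟨max M 0, ?_⟩
  rintro y ⟨r', ⟨har', _⟩, rfl⟩
  by_cases hc : cle r' q
  · exact le_max_of_le_left (hM ⟨r', ⟨har', hc⟩, rfl⟩)
  · simp [he.zero_of_not_cle r' q hc]

private lemma cle_trans' {a b c : ℝ × ℝ} (h1 : cle a b) (h2 : cle b c) : cle a c := by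
  unfold cle at *
  rw [abs_le] at *
  constructor <;> linarith [h1.1, h1.2, h2.1, h2.2]

private lemma mono_lem {e : ℝ × ℝ → ℝ × ℝ → ℝ} (he : IsE e) (q a b : ℝ × ℝ)
    (hab : cle a b) (hne : a ≠ b) (haq : cle a q) : e b q ≤ e a q := by
  by_cases haq' : a = q
  · subst haq'
    by_cases hbq : cle b a
    · exfalso
      apply hne
      have h1 := abs_le.mp hab
      have h2 := abs_le.mp hbq
      exact Prod.ext (by linarith [h1.1, h1.2, h2.1, h2.2])
        (by linarith [h1.1, h1.2, h2.1, h2.2])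
    · rw [he.zero_of_not_cle b a hbq]
      exact he.nonneg a a
  · have h1 : e b q ≤ ePlus e a q := by
      rw [ePlus, if_neg haq']
      exact le_csSup (bdd_key he q a) ⟨b, ⟨hab, fun h => hne h.symm⟩, rfl⟩
    have h2 := he.triangle a a q (by simp [cle]) haq
    have h3 := he.nonneg a a
    linarith

/-- For `e ∈ 𝓔` and `(p;q) ∈ ℝ⁴_≤` with `p ≠ q`, the value `e(p⁺;q)` is attained along the
boundary rays of the cone: with `p_n¹ = p + (1,1)/n` and `p_n² = p + (-1,1)/n`,
`e(p⁺;q) = max(sup_n e(p_n¹;q), sup_n e(p_n²;q))`. -/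
theorem stmt7 (e : ℝ × ℝ → ℝ × ℝ → ℝ) (he : IsE e)
    (p q : ℝ × ℝ) (hpq : cle p q) (hne : p ≠ q) :
    ePlus e p q =
      max (⨆ n : ℕ+, e (p.1 + 1 / (n : ℝ), p.2 + 1 / (n : ℝ)) q)
          (⨆ n : ℕ+, e (p.1 - 1 / (n : ℝ), p.2 + 1 / (n : ℝ)) q) := by
  have hS := bdd_key he q p
  have hEP : ePlus e p q = sSup ((fun r' => e r' q) '' {r' | cle p r' ∧ r' ≠ p}) := by
    rw [ePlus, if_neg hne]
  have hmem1 : ∀ n : ℕ+, e (p.1 + 1 / (n : ℝ), p.2 + 1 / (n : ℝ)) q ∈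
      ((fun r' => e r' q) '' {r' | cle p r' ∧ r' ≠ p}) := by
    intro n
    have hn : (0:ℝ) < 1 / (n:ℝ) := by positivity
    refine ⟨_, ⟨?_, ?_⟩, rfl⟩
    · show |p.1 + 1 / (n:ℝ) - p.1| ≤ p.2 + 1 / (n:ℝ) - p.2
      rw [abs_le]; constructor <;> linarith
    · intro h
      have h2 : p.2 + 1/(n:ℝ) = p.2 := congrArg Prod.snd h
      linarith
  have hmem2 : ∀ n : ℕ+, e (p.1 - 1 / (n : ℝ), p.2 + 1 / (n : ℝ)) q ∈
      ((fun r' => e r' q) '' {r' | cle p r' ∧ r' ≠ p}) := by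
    intro n
    have hn : (0:ℝ) < 1 / (n:ℝ) := by positivity
    refine ⟨_, ⟨?_, ?_⟩, rfl⟩
    · show |p.1 - 1 / (n:ℝ) - p.1| ≤ p.2 + 1 / (n:ℝ) - p.2
      rw [abs_le]; constructor <;> linarith
    · intro h
      have h2 : p.2 + 1/(n:ℝ) = p.2 := congrArg Prod.snd h
      linarith
  have hb1 : BddAbove (Set.range fun n : ℕ+ => e (p.1 + 1 / (n : ℝ), p.2 + 1 / (n : ℝ)) q) :=
    BddAbove.mono (Set.range_subset_iff.mpr hmem1) hS
  have hb2 : BddAbove (Set.range fun n : ℕ+ => e (p.1 - 1 / (n : ℝ), p.2 + 1 / (n : ℝ)) q) :=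
    BddAbove.mono (Set.range_subset_iff.mpr hmem2) hS
  apply le_antisymm
  · rw [hEP]
    apply csSup_le ⟨_, hmem1 1⟩
    rintro y ⟨r', ⟨hpr', hr'p⟩, rfl⟩
    by_cases hcq : cle r' q
    · have hxt := abs_le.mp hpr'
      have ht0 : 0 < r'.2 - p.2 := by
        rcases lt_or_eq_of_le (le_trans (abs_nonneg (r'.1 - p.1)) hpr') with h | h
        · exact h
        · exfalso
          exact hr'p (Prod.ext (by linarith [hxt.1, hxt.2]) (by linarith))
      by_cases hcase : 0 < (r'.2 - p.2) + (r'.1 - p.1)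
      · obtain ⟨m, hm⟩ := exists_nat_gt
          (max (1/(r'.2 - p.2)) (2/((r'.2 - p.2) + (r'.1 - p.1))))
        set n : ℕ+ := ⟨m + 1, m.succ_pos⟩ with hn_def
        have hnn : (m:ℝ) < (n:ℝ) := by
          have : ((n:ℕ):ℝ) = (m:ℝ) + 1 := by norm_cast
          push_cast at this ⊢
          linarith
        have hnpos : (0:ℝ) < (n:ℝ) := by positivity
        have hA : 1/(r'.2 - p.2) < (n:ℝ) := lt_trans (lt_of_le_of_lt (le_max_left _ _) hm) hnn
        have hB : 2/((r'.2 - p.2) + (r'.1 - p.1)) < (n:ℝ) :=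
          lt_trans (lt_of_le_of_lt (le_max_right _ _) hm) hnn
        have h1n : 1/(n:ℝ) < r'.2 - p.2 := by
          rw [div_lt_iff₀ hnpos]
          have := (div_lt_iff₀ ht0).mp hA
          nlinarith
        have h2n : 2/(n:ℝ) < (r'.2 - p.2) + (r'.1 - p.1) := by
          rw [div_lt_iff₀ hnpos]
          have := (div_lt_iff₀ hcase).mp hB
          nlinarith
        have hca : cle (p.1 + 1/(n:ℝ), p.2 + 1/(n:ℝ)) r' := by
          show |r'.1 - (p.1 + 1/(n:ℝ))| ≤ r'.2 - (p.2 + 1/(n:ℝ))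
          have h2n' : 2/(n:ℝ) = 1/(n:ℝ) + 1/(n:ℝ) := by ring
          rw [h2n'] at h2n
          rw [abs_le]
          constructor <;> linarith [hxt.1, hxt.2]
        have hnea : (p.1 + 1/(n:ℝ), p.2 + 1/(n:ℝ)) ≠ r' := by
          intro h
          have h2 : p.2 + 1/(n:ℝ) = r'.2 := congrArg Prod.snd h
          linarith
        have hstep := mono_lem he q _ r' hca hnea (cle_trans' hca hcq)
        refine le_max_of_le_left (le_trans hstep ?_)
        exact le_ciSup hb1 n
      · push_neg at hcase
        obtain ⟨m, hm⟩ := exists_nat_gt (1/(r'.2 - p.2))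
        set n : ℕ+ := ⟨m + 1, m.succ_pos⟩ with hn_def
        have hnn : (m:ℝ) < (n:ℝ) := by
          have : ((n:ℕ):ℝ) = (m:ℝ) + 1 := by norm_cast
          push_cast at this ⊢
          linarith
        have hnpos : (0:ℝ) < (n:ℝ) := by positivity
        have hA : 1/(r'.2 - p.2) < (n:ℝ) := lt_trans hm hnn
        have h1n : 1/(n:ℝ) < r'.2 - p.2 := by
          rw [div_lt_iff₀ hnpos]
          have := (div_lt_iff₀ ht0).mp hA
          nlinarith
        have hxeq : r'.1 - p.1 = -(r'.2 - p.2) := by linarith [hxt.1]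
        have hca : cle (p.1 - 1/(n:ℝ), p.2 + 1/(n:ℝ)) r' := by
          show |r'.1 - (p.1 - 1/(n:ℝ))| ≤ r'.2 - (p.2 + 1/(n:ℝ))
          rw [abs_le]; constructor <;> linarith
        have hnea : (p.1 - 1/(n:ℝ), p.2 + 1/(n:ℝ)) ≠ r' := by
          intro h
          have h2 : p.2 + 1/(n:ℝ) = r'.2 := congrArg Prod.snd h
          linarith
        have hstep := mono_lem he q _ r' hca hnea (cle_trans' hca hcq)
        refine le_max_of_le_right (le_trans hstep ?_)
        exact le_ciSup hb2 n
    · have h0 : (fun r' => e r' q) r' = 0 := he.zero_of_not_cle r' q hcq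
      rw [h0]
      exact le_max_of_le_left (le_trans (he.nonneg _ _) (le_ciSup hb1 1))
  · rw [hEP]
    exact max_le (ciSup_le fun n => le_csSup hS (hmem1 n))
      (ciSup_le fun n => le_csSup hS (hmem2 n))

end
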